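/- Suppose x, u, o, z, z_next, a, w are finite random variables with x ⊥ (w, o) | (a, z, u) (decoupled-POMDP independence). Then the matrix identity P(W, z_next, o | a, z, U)·P(U | a, z, X) = P(W, z_next, o | a, z, X) holds, where all matrices are of conditional probabilities given fixed (a, z): (P(W, z_next, o | a, z, U))_{ij} = P(w_i, z_next, o | a, z, u_j), and similarly for the others. If moreover P(U | a, z, X) restricted to a column index set J with |J| = |U| is invertible, then P(W, z_next, o | a, z, U) = P_J(W, z_next, o | a, z, X)·P_J(U | a, z, X)^{-1}. -/
import Mathlib


open Finset Matrix
open scoped Classical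

noncomputable def Pr {Ω : Type*} [Fintype Ω] (μ : Ω → ℝ) (E : Ω → Prop) : ℝ :=
  ∑ ω, if E ω then μ ω else 0

noncomputable def cPr {Ω : Type*} [Fintype Ω] (μ : Ω → ℝ) (E F : Ω → Prop) : ℝ :=
  Pr μ (fun ω => E ω ∧ F ω) / Pr μ F


lemma Pr_nonneg' {Ω : Type*} [Fintype Ω] (μ : Ω → ℝ) (hμ : ∀ ω, 0 ≤ μ ω)
    (E : Ω → Prop) : 0 ≤ Pr μ E := by
  apply Finset.sum_nonneg
  intro ω _
  by_cases h : E ω <;> simp [h, hμ ω]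

lemma Pr_mono' {Ω : Type*} [Fintype Ω] (μ : Ω → ℝ) (hμ : ∀ ω, 0 ≤ μ ω)
    {E F : Ω → Prop} (h : ∀ ω, E ω → F ω) : Pr μ E ≤ Pr μ F := by
  apply Finset.sum_le_sum
  intro ω _
  by_cases hE : E ω
  · simp [hE, h ω hE]
  · simp only [hE, if_false]
    by_cases hF : F ω <;> simp [hF, hμ ω]

lemma Pr_congr' {Ω : Type*} [Fintype Ω] (μ : Ω → ℝ)
    {E F : Ω → Prop} (h : ∀ ω, E ω ↔ F ω) : Pr μ E = Pr μ F := by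
  unfold Pr
  exact Finset.sum_congr rfl fun ω _ => by rw [if_congr (h ω) rfl rfl]

/-- Decoupled-POMDP factorization, first part of Lemma 6: if
`x ⊥ (w, o) | (a, z, u)` then
`P(W, z_next, o | a, z, U) * P(U | a, z, X) = P(W, z_next, o | a, z, X)`,
and if the column restriction of `P(U | a, z, X)` to an index set `J` of size `|U|`
(given as an embedding `J : U ↪ X`) is invertible, then
`P(W, z_next, o | a, z, U) = P_J(W, z_next, o | a, z, X) * P_J(U | a, z, X)⁻¹`. -/
theorem decoupled_factorization
    {Ω : Type*} [Fintype Ω] (μ : Ω → ℝ)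
    {Uty Xty Wty Oty Zty Aty : Type*}
    [Fintype Uty] [Fintype Xty] [Fintype Wty] [DecidableEq Uty]
    (u : Ω → Uty) (x : Ω → Xty) (w : Ω → Wty) (o : Ω → Oty)
    (z znext : Ω → Zty) (a : Ω → Aty)
    (hμ : ∀ ω, 0 ≤ μ ω) (hsum : ∑ ω, μ ω = 1)
    (av : Aty) (zv znv : Zty) (ov : Oty)
    -- positivity of the conditioning events
    (hposu : ∀ uv, 0 < Pr μ (fun ω => a ω = av ∧ z ω = zv ∧ u ω = uv))
    (hposx : ∀ xv, 0 < Pr μ (fun ω => a ω = av ∧ z ω = zv ∧ x ω = xv))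
    -- x ⊥ (w, o) | (a, z, u): P(w, z_next, o | a, z, u, x) = P(w, z_next, o | a, z, u)
    (hCI : ∀ (wv : Wty) (zn : Zty) (ov' : Oty) (uv : Uty) (xv : Xty),
      cPr μ (fun ω => w ω = wv ∧ znext ω = zn ∧ o ω = ov')
          (fun ω => a ω = av ∧ z ω = zv ∧ u ω = uv ∧ x ω = xv) =
        cPr μ (fun ω => w ω = wv ∧ znext ω = zn ∧ o ω = ov')
          (fun ω => a ω = av ∧ z ω = zv ∧ u ω = uv)) :
    ((Matrix.of fun (wv : Wty) (uv : Uty) =>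
        cPr μ (fun ω => w ω = wv ∧ znext ω = znv ∧ o ω = ov)
          (fun ω => a ω = av ∧ z ω = zv ∧ u ω = uv)) *
      (Matrix.of fun (uv : Uty) (xv : Xty) =>
        cPr μ (fun ω => u ω = uv) (fun ω => a ω = av ∧ z ω = zv ∧ x ω = xv)) =
      Matrix.of fun (wv : Wty) (xv : Xty) =>
        cPr μ (fun ω => w ω = wv ∧ znext ω = znv ∧ o ω = ov)
          (fun ω => a ω = av ∧ z ω = zv ∧ x ω = xv)) ∧
    (∀ J : Uty ↪ Xty,
      IsUnit (Matrix.of fun (uv j : Uty) =>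
        cPr μ (fun ω => u ω = uv) (fun ω => a ω = av ∧ z ω = zv ∧ x ω = J j)).det →
      (Matrix.of fun (wv : Wty) (uv : Uty) =>
        cPr μ (fun ω => w ω = wv ∧ znext ω = znv ∧ o ω = ov)
          (fun ω => a ω = av ∧ z ω = zv ∧ u ω = uv)) =
      (Matrix.of fun (wv : Wty) (j : Uty) =>
        cPr μ (fun ω => w ω = wv ∧ znext ω = znv ∧ o ω = ov)
          (fun ω => a ω = av ∧ z ω = zv ∧ x ω = J j)) *
      (Matrix.of fun (uv j : Uty) =>
        cPr μ (fun ω => u ω = uv) (fun ω => a ω = av ∧ z ω = zv ∧ x ω = J j))⁻¹) := by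
  classical
  have key : ∀ (wv : Wty) (xv : Xty),
      ∑ uv : Uty,
        cPr μ (fun ω => w ω = wv ∧ znext ω = znv ∧ o ω = ov)
          (fun ω => a ω = av ∧ z ω = zv ∧ u ω = uv) *
        cPr μ (fun ω => u ω = uv) (fun ω => a ω = av ∧ z ω = zv ∧ x ω = xv) =
      cPr μ (fun ω => w ω = wv ∧ znext ω = znv ∧ o ω = ov)
        (fun ω => a ω = av ∧ z ω = zv ∧ x ω = xv) := by
    intro wv xv
    have hx := hposx xv
    have step : ∀ uv : Uty,
        cPr μ (fun ω => w ω = wv ∧ znext ω = znv ∧ o ω = ov)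
          (fun ω => a ω = av ∧ z ω = zv ∧ u ω = uv) *
        Pr μ (fun ω => u ω = uv ∧ (a ω = av ∧ z ω = zv ∧ x ω = xv)) =
        Pr μ (fun ω => (w ω = wv ∧ znext ω = znv ∧ o ω = ov) ∧
          (a ω = av ∧ z ω = zv ∧ u ω = uv ∧ x ω = xv)) := by
      intro uv
      have hre : Pr μ (fun ω => u ω = uv ∧ (a ω = av ∧ z ω = zv ∧ x ω = xv)) =
          Pr μ (fun ω => a ω = av ∧ z ω = zv ∧ u ω = uv ∧ x ω = xv) :=
        Pr_congr' μ (fun ω => by tauto)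
      rw [hre]
      by_cases hq : Pr μ (fun ω => a ω = av ∧ z ω = zv ∧ u ω = uv ∧ x ω = xv) = 0
      · have hnum : Pr μ (fun ω => (w ω = wv ∧ znext ω = znv ∧ o ω = ov) ∧
            (a ω = av ∧ z ω = zv ∧ u ω = uv ∧ x ω = xv)) = 0 := by
          have h1 := Pr_mono' μ hμ (E := fun ω => (w ω = wv ∧ znext ω = znv ∧ o ω = ov) ∧
              (a ω = av ∧ z ω = zv ∧ u ω = uv ∧ x ω = xv))
            (F := fun ω => a ω = av ∧ z ω = zv ∧ u ω = uv ∧ x ω = xv) (fun ω h => h.2)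
          have h2 := Pr_nonneg' μ hμ (fun ω => (w ω = wv ∧ znext ω = znv ∧ o ω = ov) ∧
              (a ω = av ∧ z ω = zv ∧ u ω = uv ∧ x ω = xv))
          linarith
        rw [hq, hnum, mul_zero]
      · have := (hCI wv znv ov uv xv).symm
        rw [this]
        unfold cPr
        field_simp
    calc ∑ uv : Uty,
        cPr μ (fun ω => w ω = wv ∧ znext ω = znv ∧ o ω = ov)
          (fun ω => a ω = av ∧ z ω = zv ∧ u ω = uv) *
        cPr μ (fun ω => u ω = uv) (fun ω => a ω = av ∧ z ω = zv ∧ x ω = xv)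
        = (∑ uv : Uty, Pr μ (fun ω => (w ω = wv ∧ znext ω = znv ∧ o ω = ov) ∧
            (a ω = av ∧ z ω = zv ∧ u ω = uv ∧ x ω = xv))) /
            Pr μ (fun ω => a ω = av ∧ z ω = zv ∧ x ω = xv) := by
          rw [Finset.sum_div]
          refine Finset.sum_congr rfl fun uv _ => ?_
          rw [← step uv]
          unfold cPr
          ring
      _ = cPr μ (fun ω => w ω = wv ∧ znext ω = znv ∧ o ω = ov)
            (fun ω => a ω = av ∧ z ω = zv ∧ x ω = xv) := by
          unfold cPr
          congr 1
          unfold Pr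
          rw [Finset.sum_comm]
          refine Finset.sum_congr rfl fun ω _ => ?_
          by_cases hc : (w ω = wv ∧ znext ω = znv ∧ o ω = ov) ∧
              (a ω = av ∧ z ω = zv ∧ x ω = xv)
          · rw [if_pos hc]
            rw [Finset.sum_eq_single (u ω)]
            · rw [if_pos (by tauto)]
            · intro b _ hb
              rw [if_neg (by tauto)]
            · intro h; exact absurd (Finset.mem_univ _) h
          · rw [if_neg hc]
            refine Finset.sum_eq_zero fun b _ => ?_
            rw [if_neg (by tauto)]
  have hmain : ((Matrix.of fun (wv : Wty) (uv : Uty) =>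
        cPr μ (fun ω => w ω = wv ∧ znext ω = znv ∧ o ω = ov)
          (fun ω => a ω = av ∧ z ω = zv ∧ u ω = uv)) *
      (Matrix.of fun (uv : Uty) (xv : Xty) =>
        cPr μ (fun ω => u ω = uv) (fun ω => a ω = av ∧ z ω = zv ∧ x ω = xv)) =
      Matrix.of fun (wv : Wty) (xv : Xty) =>
        cPr μ (fun ω => w ω = wv ∧ znext ω = znv ∧ o ω = ov)
          (fun ω => a ω = av ∧ z ω = zv ∧ x ω = xv)) := by
    ext wv xv
    simp only [Matrix.mul_apply, Matrix.of_apply]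
    exact key wv xv
  refine ⟨hmain, ?_⟩
  intro J hJ
  set M : Matrix Wty Uty ℝ := Matrix.of fun (wv : Wty) (uv : Uty) =>
      cPr μ (fun ω => w ω = wv ∧ znext ω = znv ∧ o ω = ov)
        (fun ω => a ω = av ∧ z ω = zv ∧ u ω = uv) with hM
  set N : Matrix Uty Xty ℝ := Matrix.of fun (uv : Uty) (xv : Xty) =>
      cPr μ (fun ω => u ω = uv) (fun ω => a ω = av ∧ z ω = zv ∧ x ω = xv) with hN
  have hNJ : (Matrix.of fun (uv j : Uty) =>
      cPr μ (fun ω => u ω = uv) (fun ω => a ω = av ∧ z ω = zv ∧ x ω = J j)) =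
      N.submatrix id (fun j => J j) := rfl
  have hRJ : (Matrix.of fun (wv : Wty) (j : Uty) =>
      cPr μ (fun ω => w ω = wv ∧ znext ω = znv ∧ o ω = ov)
        (fun ω => a ω = av ∧ z ω = zv ∧ x ω = J j)) =
      (M * N).submatrix id (fun j => J j) := by
    rw [hmain]; rfl
  rw [hNJ, hRJ]
  have hsub : (M * N).submatrix id (fun j : Uty => J j) =
      M * N.submatrix id (fun j : Uty => J j) := by
    ext i j
    simp [Matrix.mul_apply, Matrix.submatrix_apply]
  rw [hsub, Matrix.mul_assoc]
  rw [hNJ] at hJ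
  rw [Matrix.mul_nonsing_inv _ hJ, Matrix.mul_one]
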